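/- If G is a bipartite graph with maximum degree Δ, then ω(L(G)²) ≤ Δ². -/

import Mathlib

/-- Two edges of `G` at distance at most 2 (adjacency or equality in `L(G)²`). -/
def EdgesClose {V : Type*} (G : SimpleGraph V) (e f : Sym2 V) : Prop :=
  ∃ u v, u ∈ e ∧ v ∈ f ∧ (u = v ∨ G.Adj u v)

open Finset

lemma aux_main {V : Type*} [Fintype V] [DecidableEq V] (G : SimpleGraph V) [DecidableRel G.Adj]
    (T : Finset (V × V))
    (hadj : ∀ p ∈ T, G.Adj p.1 p.2)
    (hcross : ∀ p ∈ T, ∀ q ∈ T, G.Adj p.1 q.2 ∨ G.Adj q.1 p.2)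
    (w : V)
    (hw : ∀ v, (T.filter (fun p => p.2 = v)).card ≤ (T.filter (fun p => p.1 = w)).card) :
    T.card ≤ G.maxDegree ^ 2 := by
  rcases T.eq_empty_or_nonempty with rfl | ⟨p₀, hp₀⟩
  · simp
  set Δ := G.maxDegree with hΔ
  set d := (T.filter (fun p => p.1 = w)).card with hd
  set Y := (T.filter (fun p => p.1 = w)).image Prod.snd with hY
  have hYcard : Y.card = d := by
    apply Finset.card_image_of_injOn
    intro p hp q hq hpq
    simp only [Finset.mem_coe, Finset.mem_filter] at hp hq
    exact Prod.ext (hp.2.trans hq.2.symm) hpq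
  have hYmem : ∀ y ∈ Y, (w, y) ∈ T := by
    intro y hy
    rw [hY, Finset.mem_image] at hy
    obtain ⟨p, hp, hp2⟩ := hy
    rw [Finset.mem_filter] at hp
    have hwy : (w, y) = p := by
      rw [← hp.2, ← hp2]
    rw [hwy]
    exact hp.1
  have hYsub : Y ⊆ G.neighborFinset w := by
    intro y hy
    rw [SimpleGraph.mem_neighborFinset]
    exact hadj _ (hYmem y hy)
  have hdΔ : d ≤ Δ :=
    calc d = Y.card := hYcard.symm
    _ ≤ (G.neighborFinset w).card := Finset.card_le_card hYsub
    _ = G.degree w := G.card_neighborFinset_eq_degree w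
    _ ≤ Δ := G.degree_le_maxDegree w
  have hdpos : 1 ≤ d := by
    have h1 : p₀ ∈ T.filter (fun p => p.2 = p₀.2) := by
      rw [Finset.mem_filter]; exact ⟨hp₀, rfl⟩
    have h2 := hw p₀.2
    have h3 : 0 < (T.filter (fun p => p.2 = p₀.2)).card := Finset.card_pos.mpr ⟨p₀, h1⟩
    omega
  obtain ⟨y₀, hy₀⟩ : Y.Nonempty := by
    rw [← Finset.card_pos, hYcard]; omega
  have key : ∀ p ∈ T, p.2 ∉ G.neighborFinset w → ∀ y ∈ Y, G.Adj p.1 y := by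
    intro p hp hpn y hy
    rcases hcross p hp (w, y) (hYmem y hy) with h | h
    · exact h
    · exact absurd ((SimpleGraph.mem_neighborFinset G w p.2).mpr h) hpn
  have hsplit := Finset.card_filter_add_card_filter_not
    (s := T) (p := fun p => p.2 ∈ G.neighborFinset w)
  set A := T.filter (fun p => p.2 ∈ G.neighborFinset w) with hA_def
  set B := T.filter (fun p => ¬ p.2 ∈ G.neighborFinset w) with hB_def
  have hA : A.card ≤ Δ * d := by
    have hsub : A ⊆ (G.neighborFinset w).biUnion (fun y => T.filter (fun p => p.2 = y)) := by
      intro p hp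
      rw [hA_def, Finset.mem_filter] at hp
      rw [Finset.mem_biUnion]
      exact ⟨p.2, hp.2, by rw [Finset.mem_filter]; exact ⟨hp.1, rfl⟩⟩
    calc A.card ≤ _ := Finset.card_le_card hsub
      _ ≤ ∑ y ∈ G.neighborFinset w, (T.filter (fun p => p.2 = y)).card :=
          Finset.card_biUnion_le
      _ ≤ ∑ _y ∈ G.neighborFinset w, d := Finset.sum_le_sum (fun y _ => hw y)
      _ = G.degree w * d := by
          rw [Finset.sum_const, smul_eq_mul, G.card_neighborFinset_eq_degree]
      _ ≤ Δ * d := Nat.mul_le_mul_right _ (G.degree_le_maxDegree w)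
  have hB : B.card ≤ Δ * (Δ - d) := by
    have hsub : B ⊆ (G.neighborFinset y₀).biUnion (fun x => B.filter (fun p => p.1 = x)) := by
      intro p hp
      have hp' := Finset.mem_filter.mp hp
      rw [Finset.mem_biUnion]
      refine ⟨p.1, ?_, by rw [Finset.mem_filter]; exact ⟨hp, rfl⟩⟩
      rw [SimpleGraph.mem_neighborFinset]
      exact (key p hp'.1 hp'.2 y₀ hy₀).symm
    have hperx : ∀ x ∈ G.neighborFinset y₀, (B.filter (fun p => p.1 = x)).card ≤ Δ - d := by
      intro x _
      rcases (B.filter (fun p => p.1 = x)).eq_empty_or_nonempty with he | ⟨q, hq⟩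
      · rw [he]; simp
      · have hq' := Finset.mem_filter.mp hq
        have hqB := Finset.mem_filter.mp hq'.1
        have hYx : Y ⊆ G.neighborFinset x := by
          intro y hy
          rw [SimpleGraph.mem_neighborFinset, ← hq'.2]
          exact key q hqB.1 hqB.2 y hy
        have hcardle : (B.filter (fun p => p.1 = x)).card ≤ (G.neighborFinset x \ Y).card := by
          apply Finset.card_le_card_of_injOn Prod.snd
          · intro p hp
            have hp' := Finset.mem_filter.mp hp
            have hpB := Finset.mem_filter.mp hp'.1
            rw [Finset.mem_coe, Finset.mem_sdiff, SimpleGraph.mem_neighborFinset, ← hp'.2]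
            exact ⟨hadj p hpB.1, fun hpy => hpB.2 (hYsub hpy)⟩
          · intro p hp q' hq2 hpq
            have hp' := Finset.mem_filter.mp hp
            have hq2' := Finset.mem_filter.mp hq2
            exact Prod.ext (hp'.2.trans hq2'.2.symm) hpq
        calc (B.filter (fun p => p.1 = x)).card
            ≤ (G.neighborFinset x \ Y).card := hcardle
          _ = (G.neighborFinset x).card - Y.card := Finset.card_sdiff_of_subset hYx
          _ = G.degree x - d := by rw [G.card_neighborFinset_eq_degree, hYcard]
          _ ≤ Δ - d := Nat.sub_le_sub_right (G.degree_le_maxDegree x) d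
    calc B.card ≤ _ := Finset.card_le_card hsub
      _ ≤ ∑ x ∈ G.neighborFinset y₀, (B.filter (fun p => p.1 = x)).card :=
          Finset.card_biUnion_le
      _ ≤ ∑ _x ∈ G.neighborFinset y₀, (Δ - d) := Finset.sum_le_sum hperx
      _ = G.degree y₀ * (Δ - d) := by
          rw [Finset.sum_const, smul_eq_mul, G.card_neighborFinset_eq_degree]
      _ ≤ Δ * (Δ - d) := Nat.mul_le_mul_right _ (G.degree_le_maxDegree y₀)
  calc T.card = A.card + B.card := hsplit.symm
    _ ≤ Δ * d + Δ * (Δ - d) := Nat.add_le_add hA hB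
    _ = Δ ^ 2 := by rw [← Nat.mul_add, Nat.add_sub_cancel' hdΔ, sq]

lemma aux_sym {V : Type*} [Fintype V] [DecidableEq V] (G : SimpleGraph V) [DecidableRel G.Adj]
    (T : Finset (V × V))
    (hadj : ∀ p ∈ T, G.Adj p.1 p.2)
    (hcross : ∀ p ∈ T, ∀ q ∈ T, G.Adj p.1 q.2 ∨ G.Adj q.1 p.2) :
    T.card ≤ G.maxDegree ^ 2 := by
  rcases T.eq_empty_or_nonempty with rfl | ⟨p₀, hp₀⟩
  · simp
  haveI : Nonempty V := ⟨p₀.1⟩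
  have hmx1 := Finset.exists_max_image (Finset.univ : Finset V)
    (fun v => (T.filter (fun p => p.1 = v)).card) Finset.univ_nonempty
  have hmx2 := Finset.exists_max_image (Finset.univ : Finset V)
    (fun v => (T.filter (fun p => p.2 = v)).card) Finset.univ_nonempty
  obtain ⟨w₁, -, hw₁⟩ := hmx1
  obtain ⟨w₂, -, hw₂⟩ := hmx2
  by_cases hcmp : (T.filter (fun p => p.2 = w₂)).card ≤ (T.filter (fun p => p.1 = w₁)).card
  · exact aux_main G T hadj hcross w₁
      (fun v => le_trans (hw₂ v (Finset.mem_univ _)) hcmp)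
  · push_neg at hcmp
    set T' := T.image Prod.swap with hT'
    have hcard : T'.card = T.card := Finset.card_image_of_injective _ Prod.swap_injective
    have hmem : ∀ p : V × V, p ∈ T' ↔ p.swap ∈ T := by
      intro p
      rw [hT', Finset.mem_image]
      constructor
      · rintro ⟨q, hq, rfl⟩; simpa using hq
      · intro h; exact ⟨p.swap, h, by simp⟩
    have hadj' : ∀ p ∈ T', G.Adj p.1 p.2 := by
      intro p hp
      exact (hadj p.swap ((hmem p).mp hp)).symm
    have hcross' : ∀ p ∈ T', ∀ q ∈ T', G.Adj p.1 q.2 ∨ G.Adj q.1 p.2 := by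
      intro p hp q hq
      rcases hcross p.swap ((hmem p).mp hp) q.swap ((hmem q).mp hq) with h | h
      · exact Or.inr h.symm
      · exact Or.inl h.symm
    have hfc : ∀ (P : V × V → Prop) [DecidablePred P],
        (T'.filter P).card = (T.filter (fun p => P p.swap)).card := by
      intro P _
      have himg : T'.filter P = (T.filter (fun p => P p.swap)).image Prod.swap := by
        ext q
        rw [Finset.mem_filter, hmem, Finset.mem_image]
        constructor
        · intro ⟨h1, h2⟩
          exact ⟨q.swap, Finset.mem_filter.mpr ⟨h1, by simpa using h2⟩, by simp⟩
        · rintro ⟨p, hp, rfl⟩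
          have hp' := Finset.mem_filter.mp hp
          exact ⟨by simpa using hp'.1, hp'.2⟩
      rw [himg, Finset.card_image_of_injective _ Prod.swap_injective]
    have hw' : ∀ v, (T'.filter (fun p => p.2 = v)).card ≤ (T'.filter (fun p => p.1 = v)).card
        → True := fun _ _ => trivial
    have hmain := aux_main G T' hadj' hcross' w₂ (fun v => by
      rw [hfc (fun p => p.2 = v), hfc (fun p => p.1 = w₂)]
      simp only [Prod.snd_swap, Prod.fst_swap]
      exact le_trans (hw₁ v (Finset.mem_univ _)) (le_of_lt hcmp))
    rw [hcard] at hmain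
    exact hmain

/-- If `G` is a bipartite graph with maximum degree `Δ`, then `ω(L(G)²) ≤ Δ²`:
every set of edges of `G` pairwise at distance at most 2 has size at most `Δ²`. -/
theorem stmt2 {V : Type*} [Fintype V] (G : SimpleGraph V) [DecidableRel G.Adj]
    (hbip : G.Colorable 2)
    (s : Finset (Sym2 V)) (hs : ∀ e ∈ s, e ∈ G.edgeSet)
    (hcl : ∀ e ∈ s, ∀ f ∈ s, EdgesClose G e f) :
    s.card ≤ G.maxDegree ^ 2 := by
  classical
  obtain ⟨c⟩ := hbip
  set g : Sym2 V → V × V := fun e => if c e.out.1 = 0 then e.out else e.out.swap with hg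
  have h2 : ∀ x : Fin 2, x = 0 ∨ x = 1 := by decide
  have hprop : ∀ e ∈ s,
      G.Adj (g e).1 (g e).2 ∧ Sym2.mk (g e).1 (g e).2 = e ∧ c (g e).1 = 0 ∧ c (g e).2 = 1 := by
    intro e he
    have hout : Sym2.mk e.out.1 e.out.2 = e := e.out_eq
    have hadj : G.Adj e.out.1 e.out.2 := by
      have hmem : Sym2.mk e.out.1 e.out.2 ∈ G.edgeSet := by
        rw [hout]; exact hs e he
      exact hmem
    have hne : c e.out.1 ≠ c e.out.2 := c.valid hadj
    by_cases h : c e.out.1 = 0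
    · have hsnd : c e.out.2 = 1 := by
        rcases h2 (c e.out.2) with h' | h'
        · exact absurd (h.trans h'.symm) hne
        · exact h'
      refine ⟨?_, ?_, ?_, ?_⟩ <;> simp [hg, h, hout, hadj, hsnd]
    · have hfst : c e.out.1 = 1 := (h2 _).resolve_left h
      have hsnd : c e.out.2 = 0 := by
        rcases h2 (c e.out.2) with h' | h'
        · exact h'
        · exact absurd (hfst.trans h'.symm) hne
      have hmk : Sym2.mk e.out.2 e.out.1 = e := by
        rw [Sym2.eq_swap, hout]
      refine ⟨?_, ?_, ?_, ?_⟩ <;> simp [hg, h, hmk, hadj.symm, hsnd, hfst]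
  set T := s.image g with hT
  have hcardT : T.card = s.card := by
    apply Finset.card_image_of_injOn
    intro e he f hf hef
    rw [← (hprop e he).2.1, ← (hprop f hf).2.1, hef]
  have hadjT : ∀ p ∈ T, G.Adj p.1 p.2 := by
    intro p hp
    rw [hT, Finset.mem_image] at hp
    obtain ⟨e, he, rfl⟩ := hp
    exact (hprop e he).1
  have hcrossT : ∀ p ∈ T, ∀ q ∈ T, G.Adj p.1 q.2 ∨ G.Adj q.1 p.2 := by
    intro p hp q hq
    rw [hT, Finset.mem_image] at hp hq
    obtain ⟨e, he, rfl⟩ := hp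
    obtain ⟨f, hf, rfl⟩ := hq
    obtain ⟨u, v, hu, hv, huv⟩ := hcl e he f hf
    obtain ⟨hadje, hmke, hc1e, hc2e⟩ := hprop e he
    obtain ⟨hadjf, hmkf, hc1f, hc2f⟩ := hprop f hf
    rw [← hmke] at hu
    rw [← hmkf] at hv
    rw [show Sym2.mk (g e).1 (g e).2 = s((g e).1, (g e).2) from rfl, Sym2.mem_iff] at hu
    rw [show Sym2.mk (g f).1 (g f).2 = s((g f).1, (g f).2) from rfl, Sym2.mem_iff] at hv
    rcases huv with rfl | huv
    · rcases hu with rfl | rfl <;> rcases hv with h' | h'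
      · left; rw [h']; exact hadjf
      · rw [h'] at hc1e; rw [hc1e] at hc2f; exact absurd hc2f (by decide)
      · rw [h'] at hc2e; rw [hc2e] at hc1f; exact absurd hc1f (by decide)
      · right; rw [h']; exact hadjf
    · have hcne : c u ≠ c v := c.valid huv
      rcases hu with rfl | rfl <;> rcases hv with rfl | rfl
      · rw [hc1e, hc1f] at hcne; exact absurd rfl hcne
      · left; exact huv
      · right; exact huv.symm
      · rw [hc2e, hc2f] at hcne; exact absurd rfl hcne
  rw [← hcardT]
  exact aux_sym G T hadjT hcrossT
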